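/- Let G be an asymmetric simple graph on a finite vertex set with at least 6 vertices. Then there exists a vertex v of G such that the graph obtained from G by adding one new vertex whose only neighbor is v is asymmetric. -/

import Mathlib

/-- A simple graph is *asymmetric* if its only automorphism is the identity. -/
def SimpleGraph.IsAsymmetric {V : Type*} (G : SimpleGraph V) : Prop :=
  ∀ f : G ≃g G, ∀ v : V, f v = v

/-- The *asymmetric index* `ai(G)`: the minimum, over all asymmetric graphs `G'` on the
same vertex set, of the number of edges in which `G` and `G'` differ (edges removed plus
edges added); `⊤` (infinity) if no asymmetric graph on the vertex set exists. -/
noncomputable def SimpleGraph.asymIndex {V : Type*} (G : SimpleGraph V) : ℕ∞ :=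
  sInf {n : ℕ∞ | ∃ G' : SimpleGraph V, G'.IsAsymmetric ∧
    n = (symmDiff G.edgeSet G'.edgeSet).encard}

/-- The graph obtained from `G` by adding one new vertex (`none`) whose only neighbor is
`v`. -/
def SimpleGraph.addPendant {V : Type*} (G : SimpleGraph V) (v : V) :
    SimpleGraph (Option V) :=
  SimpleGraph.fromRel (fun x y =>
    (∃ a b, x = some a ∧ y = some b ∧ G.Adj a b) ∨ (x = none ∧ y = some v))

namespace AsymPendant

open SimpleGraph

variable {V : Type*}

/-- The degree of a vertex, as the `ncard` of its neighbor set. -/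
noncomputable def deg (G : SimpleGraph V) (x : V) : ℕ := (G.neighborSet x).ncard

lemma deg_iso {α β : Type*} {G : SimpleGraph α} {G' : SimpleGraph β} (f : G ≃g G') (x : α) :
    deg G' (f x) = deg G x := by
  unfold deg
  rw [← Nat.card_coe_set_eq, ← Nat.card_coe_set_eq]
  exact Nat.card_congr (f.mapNeighborSet x).symm

variable {G : SimpleGraph V} {v : V}

lemma ap_adj_some_some {a b : V} :
    (G.addPendant v).Adj (some a) (some b) ↔ G.Adj a b := by
  simp only [SimpleGraph.addPendant, SimpleGraph.fromRel_adj]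
  constructor
  · rintro ⟨hne, h | h⟩
    · rcases h with ⟨a', b', h1, h2, h3⟩ | ⟨h, -⟩
      · cases h1; cases h2; exact h3
      · exact absurd h (by simp)
    · rcases h with ⟨a', b', h1, h2, h3⟩ | ⟨h, -⟩
      · cases h1; cases h2; exact h3.symm
      · exact absurd h (by simp)
  · intro h
    exact ⟨by simpa using h.ne, Or.inl (Or.inl ⟨a, b, rfl, rfl, h⟩)⟩

lemma ap_adj_none_some {a : V} :
    (G.addPendant v).Adj none (some a) ↔ a = v := by
  simp only [SimpleGraph.addPendant, SimpleGraph.fromRel_adj]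
  constructor
  · rintro ⟨hne, h | h⟩
    · rcases h with ⟨a', b', h1, -, -⟩ | ⟨-, h2⟩
      · exact absurd h1 (by simp)
      · simpa using h2
    · rcases h with ⟨a', b', -, h1, -⟩ | ⟨h1, -⟩
      · exact absurd h1 (by simp)
      · exact absurd h1 (by simp)
  · rintro rfl
    exact ⟨by simp, Or.inl (Or.inr (by simp))⟩

lemma ap_adj_some_none {a : V} :
    (G.addPendant v).Adj (some a) none ↔ a = v := by
  rw [SimpleGraph.adj_comm]; exact ap_adj_none_some

lemma nbr_none : (G.addPendant v).neighborSet none = {some v} := by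
  ext t
  cases t with
  | none => simp [SimpleGraph.mem_neighborSet]
  | some a =>
      simp only [SimpleGraph.mem_neighborSet, ap_adj_none_some, Set.mem_singleton_iff,
        Option.some.injEq]

lemma nbr_some_ne {a : V} (h : a ≠ v) :
    (G.addPendant v).neighborSet (some a) = some '' G.neighborSet a := by
  ext t
  cases t with
  | none => simp [SimpleGraph.mem_neighborSet, ap_adj_some_none, h]
  | some b => simp [SimpleGraph.mem_neighborSet, ap_adj_some_some]

lemma nbr_some_v :
    (G.addPendant v).neighborSet (some v) = insert none (some '' G.neighborSet v) := by
  ext t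
  cases t with
  | none => simp [SimpleGraph.mem_neighborSet, ap_adj_some_none]
  | some b => simp [SimpleGraph.mem_neighborSet, ap_adj_some_some]

lemma deg_ap_none : deg (G.addPendant v) none = 1 := by
  rw [deg, nbr_none, Set.ncard_singleton]

lemma deg_ap_some_ne [Fintype V] {a : V} (h : a ≠ v) :
    deg (G.addPendant v) (some a) = deg G a := by
  rw [deg, nbr_some_ne h, Set.ncard_image_of_injective _ (Option.some_injective V)]; rfl

lemma deg_ap_some_v [Fintype V] :
    deg (G.addPendant v) (some v) = deg G v + 1 := by
  classical
  rw [deg, nbr_some_v, Set.ncard_insert_of_notMem (by simp) (Set.toFinite _),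
    Set.ncard_image_of_injective _ (Option.some_injective V)]
  rfl

/-- If an automorphism of `G.addPendant v` fixes `none`, it is the identity. -/
lemma eq_id_of_none_fixed (hG : G.IsAsymmetric)
    (f : (G.addPendant v) ≃g (G.addPendant v)) (h : f none = none) : ∀ t, f t = t := by
  have hs : ∀ a : V, ∃ b, f.toEquiv (some a) = some b := by
    intro a
    cases hfa : f (some a) with
    | none =>
        exfalso
        have : (some a : Option V) = none := f.injective (by rw [hfa, h])
        simp at this
    | some b => exact ⟨b, rfl⟩
  set e := Equiv.removeNone f.toEquiv with he_def
  have he : ∀ a, some (e a) = f (some a) := fun a => Equiv.removeNone_some _ (hs a)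
  have hiso : ∀ a b : V, G.Adj (e a) (e b) ↔ G.Adj a b := by
    intro a b
    rw [← ap_adj_some_some (v := v), ← ap_adj_some_some (v := v) (a := a), he, he,
      f.map_rel_iff]
  have hfix : ∀ a : V, e a = a := hG ⟨e, hiso _ _⟩
  intro t
  cases t with
  | none => exact h
  | some a => rw [← he a, hfix a]

/-- An "arm" of length `k`: an injective walk `x 0, …, x k` whose internal vertices
have degree `2`. -/
def IsArm (G : SimpleGraph V) (k : ℕ) (x : ℕ → V) : Prop :=
  (∀ i j, i ≤ k → j ≤ k → x i = x j → i = j) ∧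
  (∀ i, i < k → G.Adj (x i) (x (i + 1))) ∧
  (∀ i, 0 < i → i < k → deg G (x i) = 2)

lemma arm_lt_card [Fintype V] {k : ℕ} {x : ℕ → V} (h : IsArm G k x) :
    k < Fintype.card V := by
  have : Function.Injective (fun i : Fin (k + 1) => x i) := by
    intro i j hij
    exact Fin.ext (h.1 i j (Nat.lt_succ_iff.mp i.isLt) (Nat.lt_succ_iff.mp j.isLt) hij)
  have := Fintype.card_le_of_injective _ this
  simpa using this

lemma pair_eq {α : Type*} {s : Set α} (h2 : s.ncard = 2) {a b : α}
    (ha : a ∈ s) (hb : b ∈ s) (hab : a ≠ b) : s = {a, b} := by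
  obtain ⟨u, w, huw, rfl⟩ := Set.ncard_eq_two.mp h2
  simp only [Set.mem_insert_iff, Set.mem_singleton_iff] at ha hb
  rcases ha with rfl | rfl <;> rcases hb with rfl | rfl
  · exact absurd rfl hab
  · rfl
  · rw [Set.pair_comm]
  · exact absurd rfl hab

section NoPath

variable [Fintype V]

omit [Fintype V] in
/-- A maximal arm ending in a vertex of degree one is a whole path component;
reversing it is a nontrivial automorphism, contradicting asymmetry. -/
lemma no_path (hG : G.IsAsymmetric) {k : ℕ} {x : ℕ → V} (hk : 1 ≤ k)
    (ha : IsArm G k x) (h0 : deg G (x 0) = 1) (hK : deg G (x k) = 1) : False := by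
  classical
  obtain ⟨hinj, hadj, hdeg⟩ := ha
  -- neighbor set characterizations
  have hN0 : G.neighborSet (x 0) = {x 1} := by
    obtain ⟨a, hNa⟩ := Set.ncard_eq_one.mp h0
    have hmem : x 1 ∈ G.neighborSet (x 0) := hadj 0 hk
    rw [hNa] at hmem ⊢
    rw [Set.mem_singleton_iff] at hmem
    rw [hmem]
  have hNk : G.neighborSet (x k) = {x (k - 1)} := by
    obtain ⟨a, hNa⟩ := Set.ncard_eq_one.mp hK
    have hmem : x (k - 1) ∈ G.neighborSet (x k) := by
      have := hadj (k - 1) (by omega)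
      have he : k - 1 + 1 = k := by omega
      rw [he] at this
      exact this.symm
    rw [hNa] at hmem ⊢
    rw [Set.mem_singleton_iff] at hmem
    rw [hmem]
  have hNi : ∀ i, 0 < i → i < k →
      G.neighborSet (x i) = {x (i - 1), x (i + 1)} := by
    intro i h1 h2
    have hm1 : x (i - 1) ∈ G.neighborSet (x i) := by
      have := hadj (i - 1) (by omega)
      have he : i - 1 + 1 = i := by omega
      rw [he] at this
      exact this.symm
    have hm2 : x (i + 1) ∈ G.neighborSet (x i) := hadj i h2
    exact pair_eq (hdeg i h1 h2) hm1 hm2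
      (fun hcon => by have := hinj _ _ (by omega) (by omega) hcon; omega)
  -- adjacency characterization within the arm
  have adjchar : ∀ i j, i ≤ k → j ≤ k → G.Adj (x i) (x j) →
      j = i + 1 ∨ i = j + 1 := by
    intro i j hi hj hij
    have hmem : x j ∈ G.neighborSet (x i) := hij
    by_cases h0i : i = 0
    · subst h0i
      rw [hN0, Set.mem_singleton_iff] at hmem
      exact Or.inl (by simpa using hinj j 1 hj hk hmem)
    by_cases hki : i = k
    · subst hki
      rw [hNk, Set.mem_singleton_iff] at hmem
      have := hinj j (i - 1) hj (by omega) hmem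
      omega
    · rw [hNi i (by omega) (by omega)] at hmem
      rcases hmem with hm | hm
      · have := hinj j (i - 1) hj (by omega) hm; omega
      · have := hinj j (i + 1) hj (by omega) hm; omega
  -- no edges leave the arm
  have notmem : ∀ z, (∀ i, i ≤ k → x i ≠ z) → ∀ i, i ≤ k → ¬ G.Adj (x i) z := by
    intro z hz i hi hadj'
    have hmem : z ∈ G.neighborSet (x i) := hadj'
    by_cases h0i : i = 0
    · subst h0i
      rw [hN0, Set.mem_singleton_iff] at hmem
      exact hz 1 hk hmem.symm
    by_cases hki : i = k
    · subst hki
      rw [hNk, Set.mem_singleton_iff] at hmem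
      exact hz (i - 1) (by omega) hmem.symm
    · rw [hNi i (by omega) (by omega)] at hmem
      rcases hmem with hm | hm
      · exact hz (i - 1) (by omega) hm.symm
      · exact hz (i + 1) (by omega) hm.symm
  -- the reversal map
  set g : V → V := fun z => if h : ∃ i, i ≤ k ∧ x i = z then x (k - Nat.find h) else z
    with hg_def
  have hg1 : ∀ i, i ≤ k → g (x i) = x (k - i) := by
    intro i hi
    have h : ∃ j, j ≤ k ∧ x j = x i := ⟨i, hi, rfl⟩
    have hfind : Nat.find h = i :=
      hinj _ _ (Nat.find_spec h).1 hi (Nat.find_spec h).2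
    rw [hg_def]
    simp only [dif_pos h, hfind]
  have hg2 : ∀ z, (∀ i, i ≤ k → x i ≠ z) → g z = z := by
    intro z hz
    rw [hg_def]
    simp only
    rw [dif_neg]
    rintro ⟨i, hi, he⟩
    exact hz i hi he
  have ginv : Function.Involutive g := by
    intro z
    by_cases h : ∃ i, i ≤ k ∧ x i = z
    · obtain ⟨i, hi, rfl⟩ := h
      rw [hg1 i hi, hg1 (k - i) (Nat.sub_le _ _), Nat.sub_sub_self hi]
    · push_neg at h
      rw [hg2 z h, hg2 z h]
  have onedir : ∀ a b, G.Adj a b → G.Adj (g a) (g b) := by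
    intro a b hab
    by_cases hA : ∃ i, i ≤ k ∧ x i = a
    · obtain ⟨i, hi, rfl⟩ := hA
      by_cases hB : ∃ j, j ≤ k ∧ x j = b
      · obtain ⟨j, hj, rfl⟩ := hB
        rw [hg1 i hi, hg1 j hj]
        rcases adjchar i j hi hj hab with h | h
        · have he : k - i = (k - j) + 1 := by omega
          rw [he]
          exact (hadj (k - j) (by omega)).symm
        · have he : k - j = (k - i) + 1 := by omega
          rw [he]
          exact hadj (k - i) (by omega)
      · push_neg at hB
        exact absurd hab (notmem b hB i hi)
    · push_neg at hA
      by_cases hB : ∃ j, j ≤ k ∧ x j = b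
      · obtain ⟨j, hj, rfl⟩ := hB
        exact absurd hab.symm (notmem a hA j hj)
      · push_neg at hB
        rw [hg2 a hA, hg2 b hB]
        exact hab
  have hiff : ∀ a b, G.Adj (g a) (g b) ↔ G.Adj a b := by
    intro a b
    constructor
    · intro h
      have := onedir _ _ h
      rwa [ginv a, ginv b] at this
    · exact onedir a b
  have hmap : ∀ ⦃a b : V⦄,
      G.Adj (Function.Involutive.toPerm g ginv a) (Function.Involutive.toPerm g ginv b)
        ↔ G.Adj a b := by
    intro a b
    simpa [Function.Involutive.coe_toPerm] using hiff a b
  have hfix := hG ⟨Function.Involutive.toPerm g ginv, @hmap⟩ (x 0)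
  have hfix' : g (x 0) = x 0 := hfix
  rw [hg1 0 (by omega)] at hfix'
  simp only [Nat.sub_zero] at hfix'
  have := hinj k 0 le_rfl (by omega) hfix'
  omega

end NoPath

end AsymPendant

/-- Every asymmetric graph on at least 6 vertices can be extended to an asymmetric graph
by adding a single vertex joined by a single edge to some vertex `v`. -/
theorem exists_isAsymmetric_addPendant {V : Type*} [Fintype V]
    (hV : 6 ≤ Fintype.card V) (G : SimpleGraph V) (hG : G.IsAsymmetric) :
    ∃ v : V, (G.addPendant v).IsAsymmetric := by
  classical
  open AsymPendant in
  by_cases hpend : ∃ p, AsymPendant.deg G p = 1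
  · -- Main case: G has a pendant vertex.
    obtain ⟨p0, hp0⟩ := hpend
    set S : Set ℕ := {k | ∃ x : ℕ → V, AsymPendant.IsArm G k x ∧ AsymPendant.deg G (x 0) = 1}
      with hS_def
    have hS0 : 0 ∈ S := by
      refine ⟨fun _ => p0, ⟨?_, ?_, ?_⟩, hp0⟩
      · intro i j hi hj _; omega
      · intro i hi; omega
      · intro i h1 h2; omega
    have hbdd : BddAbove S := by
      refine ⟨Fintype.card V, ?_⟩
      rintro k ⟨x, harm, -⟩
      exact le_of_lt (AsymPendant.arm_lt_card harm)
    set M : ℕ := sSup S with hM_def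
    have hMmem : M ∈ S := Nat.sSup_mem ⟨0, hS0⟩ hbdd
    have hMmax : ∀ k ∈ S, k ≤ M := fun k hk => le_csSup hbdd hk
    obtain ⟨x, ⟨hinj, hadj, hdeg2⟩, hp1⟩ := hMmem
    -- M ≥ 1
    have hM1 : 1 ≤ M := by
      obtain ⟨a, hNa⟩ := Set.ncard_eq_one.mp hp1
      have haadj : G.Adj (x 0) a := by
        have : a ∈ G.neighborSet (x 0) := by rw [hNa]; exact rfl
        exact this
      refine hMmax 1 ⟨fun i => if i = 0 then x 0 else a, ⟨?_, ?_, ?_⟩, by simpa using hp1⟩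
      · intro i j hi hj he
        simp only at he
        by_cases hi0 : i = 0 <;> by_cases hj0 : j = 0
        · omega
        · rw [if_pos hi0, if_neg hj0] at he
          exact absurd he haadj.ne
        · rw [if_neg hi0, if_pos hj0] at he
          exact absurd he.symm haadj.ne
        · omega
      · intro i hi
        have : i = 0 := by omega
        subst this
        simpa using haadj
      · intro i h1 h2; omega
    refine ⟨x 0, ?_⟩
    intro f t
    by_cases hf : f none = none
    · exact AsymPendant.eq_id_of_none_fixed hG f hf t
    exfalso
    -- basic facts
    have hdegiso : ∀ t : Option V,
        AsymPendant.deg (G.addPendant (x 0)) (f t) = AsymPendant.deg (G.addPendant (x 0)) t :=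
      fun t => AsymPendant.deg_iso f t
    have hBs : ∀ i, i ≤ M → ∃ b, f (some (x i)) = some b := by
      intro i hi
      cases hfi : f (some (x i)) with
      | some b => exact ⟨b, rfl⟩
      | none =>
        exfalso
        have hd1 : AsymPendant.deg (G.addPendant (x 0)) (some (x i)) = 1 := by
          rw [← hdegiso (some (x i)), hfi, AsymPendant.deg_ap_none]
        by_cases hi0 : i = 0
        · subst hi0
          rw [AsymPendant.deg_ap_some_v] at hd1
          omega
        by_cases hiM : i = M
        · subst hiM
          have hne : x M ≠ x 0 := fun hcon => by
            have := hinj M 0 le_rfl (by omega) hcon; omega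
          rw [AsymPendant.deg_ap_some_ne hne] at hd1
          exact AsymPendant.no_path hG hM1 ⟨hinj, hadj, hdeg2⟩ hp1 hd1
        · have hne : x i ≠ x 0 := fun hcon => by
            have := hinj i 0 hi (by omega) hcon; omega
          rw [AsymPendant.deg_ap_some_ne hne] at hd1
          have := hdeg2 i (by omega) (by omega)
          omega
    obtain ⟨b0, hb0⟩ : ∃ b, f none = some b := by
      cases hfn : f none with
      | none => exact absurd hfn hf
      | some b => exact ⟨b, rfl⟩
    set B : ℕ → V := fun i => if i = 0 then b0 else (f (some (x (i - 1)))).getD b0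
      with hB_def
    have hB0 : f none = some (B 0) := by simp [hB_def, hb0]
    have hBs' : ∀ i, i ≤ M → f (some (x i)) = some (B (i + 1)) := by
      intro i hi
      obtain ⟨b, hb⟩ := hBs i hi
      simp [hB_def, hb]
    have hBinj : ∀ i j, i ≤ M + 1 → j ≤ M + 1 → B i = B j → i = j := by
      intro i j hi hj hij
      match i, j with
      | 0, 0 => rfl
      | 0, (j + 1) =>
          exfalso
          have : f none = f (some (x j)) := by
            rw [hB0, hBs' j (by omega), hij]
          have := f.injective this
          simp at this
      | (i + 1), 0 =>
          exfalso
          have : f none = f (some (x i)) := by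
            rw [hB0, hBs' i (by omega), hij]
          have := f.injective this
          simp at this
      | (i + 1), (j + 1) =>
          have : f (some (x i)) = f (some (x j)) := by
            rw [hBs' i (by omega), hBs' j (by omega), hij]
          have h2 := f.injective this
          simp only [Option.some.injEq] at h2
          have := hinj i j (by omega) (by omega) h2
          omega
    have hBadj : ∀ i, i ≤ M → G.Adj (B i) (B (i + 1)) := by
      intro i hi
      match i with
      | 0 =>
          have h0 : (G.addPendant (x 0)).Adj none (some (x 0)) :=
            AsymPendant.ap_adj_none_some.mpr rfl
          have := f.map_rel_iff.mpr h0
          rw [hB0, hBs' 0 (by omega)] at this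
          exact AsymPendant.ap_adj_some_some.mp this
      | (n + 1) =>
          have h0 : (G.addPendant (x 0)).Adj (some (x n)) (some (x (n + 1))) :=
            AsymPendant.ap_adj_some_some.mpr (hadj n (by omega))
          have := f.map_rel_iff.mpr h0
          rw [hBs' n (by omega), hBs' (n + 1) hi] at this
          exact AsymPendant.ap_adj_some_some.mp this
    have hB0deg : AsymPendant.deg G (B 0) = 1 ∧ B 0 ≠ x 0 := by
      have hd1 : AsymPendant.deg (G.addPendant (x 0)) (some (B 0)) = 1 := by
        rw [← hB0, hdegiso none, AsymPendant.deg_ap_none]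
      by_cases h : B 0 = x 0
      · rw [h, AsymPendant.deg_ap_some_v] at hd1
        omega
      · rw [AsymPendant.deg_ap_some_ne h] at hd1
        exact ⟨hd1, h⟩
    have hN0 : G.neighborSet (x 0) = {x 1} := by
      obtain ⟨a, hNa⟩ := Set.ncard_eq_one.mp hp1
      have hmem : x 1 ∈ G.neighborSet (x 0) := hadj 0 hM1
      rw [hNa] at hmem ⊢
      rw [Set.mem_singleton_iff] at hmem
      rw [hmem]
    have hBne : ∀ i, 1 ≤ i → i ≤ M → B i ≠ x 0 := by
      intro i h1 h2 he
      match i, h1 with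
      | (n + 1), _ =>
        have a1 : G.Adj (B n) (B (n + 1)) := hBadj n (by omega)
        have a2 : G.Adj (B (n + 1)) (B (n + 2)) := hBadj (n + 1) h2
        rw [he] at a1 a2
        have m1 : B n ∈ G.neighborSet (x 0) := a1.symm
        have m2 : B (n + 2) ∈ G.neighborSet (x 0) := a2
        rw [hN0, Set.mem_singleton_iff] at m1 m2
        have : B n = B (n + 2) := by rw [m1, m2]
        have := hBinj n (n + 2) (by omega) (by omega) this
        omega
    have hBdeg : ∀ i, 1 ≤ i → i ≤ M → AsymPendant.deg G (B i) = 2 := by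
      intro i h1 h2
      match i, h1 with
      | (n + 1), _ =>
        have hd : AsymPendant.deg (G.addPendant (x 0)) (some (B (n + 1)))
            = AsymPendant.deg (G.addPendant (x 0)) (some (x n)) := by
          rw [← hBs' n (by omega)]
          exact hdegiso (some (x n))
        have hrhs : AsymPendant.deg (G.addPendant (x 0)) (some (x n)) = 2 := by
          by_cases hn : n = 0
          · subst hn
            rw [AsymPendant.deg_ap_some_v, hp1]
          · have hne : x n ≠ x 0 := fun hcon => by
              have := hinj n 0 (by omega) (by omega) hcon; omega
            rw [AsymPendant.deg_ap_some_ne hne]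
            exact hdeg2 n (by omega) (by omega)
        rw [hrhs] at hd
        have hne : B (n + 1) ≠ x 0 := hBne (n + 1) (by omega) h2
        rwa [AsymPendant.deg_ap_some_ne hne] at hd
    have hfin : M + 1 ∈ S := by
      refine ⟨B, ⟨hBinj, ?_, ?_⟩, hB0deg.1⟩
      · intro i hi
        exact hBadj i (by omega)
      · intro i hi1 hi2
        exact hBdeg i (by omega) (by omega)
    have := hMmax (M + 1) hfin
    omega
  · by_cases hedge : ∃ a, (G.neighborSet a).Nonempty
    · -- no pendant, but some edge: attach anywhere with a neighbor
      obtain ⟨v, b, hb⟩ := hedge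
      refine ⟨v, ?_⟩
      intro f t
      by_cases hf : f none = none
      · exact AsymPendant.eq_id_of_none_fixed hG f hf t
      · exfalso
        obtain ⟨u, hu⟩ : ∃ u, f none = some u := by
          cases hfn : f none with
          | none => exact absurd hfn hf
          | some u => exact ⟨u, rfl⟩
        have hd1 : AsymPendant.deg (G.addPendant v) (some u) = 1 := by
          rw [← hu, AsymPendant.deg_iso f none, AsymPendant.deg_ap_none]
        by_cases huv : u = v
        · subst huv
          rw [AsymPendant.deg_ap_some_v] at hd1
          have : AsymPendant.deg G u = 0 := by omega
          have hpos : 0 < AsymPendant.deg G u :=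
            (Set.ncard_pos (Set.toFinite _)).mpr ⟨b, hb⟩
          omega
        · rw [AsymPendant.deg_ap_some_ne huv] at hd1
          exact hpend ⟨u, hd1⟩
    · -- G has no edges at all: contradicts asymmetry since |V| ≥ 2
      exfalso
      push_neg at hedge
      have hnoadj : ∀ a b : V, ¬ G.Adj a b := by
        intro a b hab
        have hmem : b ∈ G.neighborSet a := hab
        rw [hedge a] at hmem
        exact hmem
      obtain ⟨a, b, hab⟩ := Fintype.exists_pair_of_one_lt_card (α := V) (by omega)
      have hmap : ∀ ⦃u w : V⦄, G.Adj (Equiv.swap a b u) (Equiv.swap a b w) ↔ G.Adj u w :=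
        fun u w => iff_of_false (hnoadj _ _) (hnoadj _ _)
      have hfix := hG ⟨Equiv.swap a b, @hmap⟩ a
      have hfix' : Equiv.swap a b a = a := hfix
      rw [Equiv.swap_apply_left] at hfix'
      exact hab hfix'.symm
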